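/- arXiv:2004.01679 — 3 statements merged into one kernel-verified Lean document; each statement's English description precedes it below -/
import Mathlib

section
/- Identification of the dual cone of ordered tuples of positive semidefinite matrices: For every integers D, K ≥ 1, the dual cone satisfies Ū_K^* = { x ∈ (S^D)^K : for every k ∈ {1,…,K}, Σ_{ℓ=k}^K x_ℓ ∈ S^D_+ }. Moreover, the bidual relation Ū_K = { v ∈ (S^D)^K : x·v ≥ 0 for every x ∈ Ū_K^* } holds. -/
/-!
Statement 1: Identification of the dual cone of ordered tuples of positive
semidefinite matrices, together with the bidual relation.

We model the space `S^D` of symmetric `D × D` real matrices by its coordinates: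
functions on the set of index pairs `(i, j)` with `i ≤ j`.  The associated
symmetric matrix is recovered by `toMat`, and all inner products are the trace
(Frobenius) inner products of the corresponding symmetric matrices.
-/

noncomputable section

namespace SpinGlassStmt

/-- Index set for the coordinates of a symmetric `D × D` matrix. -/
def SIdx (D : ℕ) := {p : Fin D × Fin D // p.1 ≤ p.2}

instance (D : ℕ) : Fintype (SIdx D) := by unfold SIdx; infer_instance
instance (D : ℕ) : DecidableEq (SIdx D) := by unfold SIdx; infer_instance

/-- Coordinates of an element of `S^D`. -/
abbrev Sym (D : ℕ) := SIdx D → ℝ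

/-- The symmetric matrix associated with an element of `Sym D`. -/
def toMat {D : ℕ} (a : Sym D) : Matrix (Fin D) (Fin D) ℝ :=
  Matrix.of fun i j => if h : i ≤ j then a ⟨(i, j), h⟩ else a ⟨(j, i), le_of_lt (not_le.mp h)⟩

/-- Positive semidefiniteness, as a predicate on `Sym D`. -/
def PSD {D : ℕ} (a : Sym D) : Prop := (toMat a).PosSemidef

/-- Trace (Frobenius) inner product `a · b = tr (a b)` on `S^D`. -/
def sdot {D : ℕ} (a b : Sym D) : ℝ :=
  ∑ i : Fin D, ∑ j : Fin D, toMat a i j * toMat b i j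

/-- The space `(S^D)^K`. -/
abbrev EK (D K : ℕ) := Fin K → Sym D

/-- Inner product on `(S^D)^K`:  `x · y = ∑ k, x k · y k`. -/
def kdot {D K : ℕ} (x y : EK D K) : ℝ := ∑ k : Fin K, sdot (x k) (y k)

/-- The closed convex cone `Ū_K` of nondecreasing tuples of positive semidefinite
matrices. -/
def Ubar (D K : ℕ) : Set (EK D K) :=
  {x | (∀ k, PSD (x k)) ∧ ∀ i j : Fin K, i ≤ j → PSD (x j - x i)}

/-- The dual cone `Ū_K^*`. -/
def Udual (D K : ℕ) : Set (EK D K) := {x | ∀ v ∈ Ubar D K, 0 ≤ kdot x v}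

open Matrix in
lemma _dummy : True := trivial

open Matrix

variable {D : ℕ}

lemma toMat_symm (a : Sym D) (i j : Fin D) : toMat a j i = toMat a i j := by
  unfold toMat
  by_cases h2 : i ≤ j
  · by_cases h1 : j ≤ i
    · have hij : i = j := le_antisymm h2 h1
      subst hij; rfl
    · simp only [Matrix.of_apply, dif_neg h1, dif_pos h2]
  · have h1 : j ≤ i := le_of_not_ge h2
    simp only [Matrix.of_apply, dif_pos h1, dif_neg h2]

lemma toMat_isHermitian (a : Sym D) : (toMat a).IsHermitian := by
  ext i j
  simp only [Matrix.conjTranspose_apply, star_trivial]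
  exact toMat_symm a i j

lemma toMat_add (a b : Sym D) : toMat (a + b) = toMat a + toMat b := by
  ext i j
  unfold toMat
  by_cases h : i ≤ j <;> simp [h] <;> rfl

lemma toMat_zero : toMat (0 : Sym D) = 0 := by
  ext i j
  unfold toMat
  by_cases h : i ≤ j <;> simp [h] <;> rfl

lemma toMat_sub (a b : Sym D) : toMat (a - b) = toMat a - toMat b := by
  ext i j
  unfold toMat
  by_cases h : i ≤ j <;> simp [h] <;> rfl

lemma toMat_neg (a : Sym D) : toMat (-a) = -(toMat a) := by
  ext i j
  unfold toMat
  by_cases h : i ≤ j <;> simp [h] <;> rfl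

/-- `toMat` as an additive monoid hom. -/
def toMatHom : Sym D →+ Matrix (Fin D) (Fin D) ℝ where
  toFun := toMat
  map_zero' := toMat_zero
  map_add' := toMat_add

lemma toMat_sum {ι : Type*} (s : Finset ι) (f : ι → Sym D) :
    toMat (∑ i ∈ s, f i) = ∑ i ∈ s, toMat (f i) :=
  map_sum (toMatHom (D := D)) f s

lemma sdot_eq_trace (a b : Sym D) : sdot a b = (toMat a * toMat b).trace := by
  unfold sdot Matrix.trace
  refine Finset.sum_congr rfl fun i _ => ?_
  simp only [Matrix.diag_apply, Matrix.mul_apply]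
  refine Finset.sum_congr rfl fun j _ => ?_
  rw [toMat_symm b]

lemma sdot_comm (a b : Sym D) : sdot a b = sdot b a := by
  rw [sdot_eq_trace, sdot_eq_trace, Matrix.trace_mul_comm]

lemma sdot_zero_left (b : Sym D) : sdot 0 b = 0 := by
  simp [sdot_eq_trace, toMat_zero]

lemma sdot_neg_left (a b : Sym D) : sdot (-a) b = -sdot a b := by
  simp [sdot_eq_trace, toMat_neg]

lemma sdot_add_left (a a' b : Sym D) : sdot (a + a') b = sdot a b + sdot a' b := by
  simp [sdot_eq_trace, toMat_add, Matrix.add_mul]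

lemma sdot_sub_right (a b c : Sym D) : sdot a (b - c) = sdot a b - sdot a c := by
  simp [sdot_eq_trace, toMat_sub, Matrix.mul_sub]

lemma sdot_sum_left {ι : Type*} (s : Finset ι) (f : ι → Sym D) (b : Sym D) :
    sdot (∑ i ∈ s, f i) b = ∑ i ∈ s, sdot (f i) b := by
  simp [sdot_eq_trace, toMat_sum, Finset.sum_mul, Matrix.trace_sum]

lemma sdot_sum_right {ι : Type*} (s : Finset ι) (a : Sym D) (f : ι → Sym D) :
    sdot a (∑ i ∈ s, f i) = ∑ i ∈ s, sdot a (f i) := by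
  simp [sdot_eq_trace, toMat_sum, Finset.mul_sum, Matrix.trace_sum]

lemma PSD_zero : PSD (0 : Sym D) := by
  unfold PSD
  rw [toMat_zero]
  exact Matrix.PosSemidef.zero

lemma trace_nonneg_of_psd {A : Matrix (Fin D) (Fin D) ℝ} (hA : A.PosSemidef) :
    0 ≤ A.trace := by
  refine Finset.sum_nonneg fun i _ => ?_
  have h := hA.dotProduct_mulVec_nonneg (Pi.single i 1)
  simpa [Matrix.mulVec_single, dotProduct, Pi.single_apply, Finset.sum_ite_eq'] using h

open scoped MatrixOrder in
lemma sdot_nonneg {a b : Sym D} (ha : PSD a) (hb : PSD b) : 0 ≤ sdot a b := by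
  rw [sdot_eq_trace]
  have ha' : (toMat a).PosSemidef := ha
  have hb' : (toMat b).PosSemidef := hb
  obtain ⟨B, hB⟩ := CStarAlgebra.nonneg_iff_eq_star_mul_self.mp hb'.nonneg
  have h2 := trace_nonneg_of_psd (ha'.mul_mul_conjTranspose_same B)
  rw [Matrix.trace_mul_comm, ← Matrix.mul_assoc] at h2
  rw [hB, Matrix.star_eq_conjTranspose, Matrix.trace_mul_comm]
  exact h2

/-- coordinates of a symmetric matrix -/
def ofMat {D : ℕ} (M : Matrix (Fin D) (Fin D) ℝ) : Sym D := fun p => M p.1.1 p.1.2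

lemma toMat_ofMat {M : Matrix (Fin D) (Fin D) ℝ} (hM : M.IsSymm) : toMat (ofMat M) = M := by
  ext i j
  unfold toMat ofMat
  by_cases h : i ≤ j
  · simp [h]
  · simp only [Matrix.of_apply, dif_neg h]
    exact (Matrix.IsSymm.apply hM j i).symm

lemma psd_of_forall_sdot {a : Sym D} (h : ∀ b : Sym D, PSD b → 0 ≤ sdot b a) : PSD a := by
  refine Matrix.PosSemidef.of_dotProduct_mulVec_nonneg (toMat_isHermitian a) fun y => ?_
  have hsym : (Matrix.vecMulVec y y).IsSymm := by
    ext i j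
    simp [Matrix.vecMulVec_apply, mul_comm]
  have hb : PSD (ofMat (Matrix.vecMulVec y y)) := by
    unfold PSD
    rw [toMat_ofMat hsym]
    refine Matrix.PosSemidef.of_dotProduct_mulVec_nonneg (by rw [Matrix.IsHermitian]; ext i j; simp [Matrix.vecMulVec_apply, mul_comm]) fun z => ?_
    have : (Matrix.vecMulVec y y) *ᵥ z = (y ⬝ᵥ z) • y := by
      ext i
      simp only [Matrix.mulVec, Matrix.vecMulVec_apply, dotProduct, Pi.smul_apply,
        smul_eq_mul, Finset.sum_mul]
      exact Finset.sum_congr rfl fun j _ => by ring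
    rw [this]
    simp only [dotProduct_smul, star_trivial, smul_eq_mul]
    rw [dotProduct_comm]
    exact mul_self_nonneg _
  have h2 := h _ hb
  rw [sdot_eq_trace, toMat_ofMat hsym] at h2
  have h3 : (Matrix.vecMulVec y y * toMat a).trace = y ⬝ᵥ (toMat a *ᵥ y) := by
    unfold Matrix.trace
    simp only [Matrix.diag_apply, Matrix.mul_apply, Matrix.vecMulVec_apply, dotProduct,
      Matrix.mulVec]
    rw [Finset.sum_comm]
    refine Finset.sum_congr rfl fun i _ => ?_
    rw [Finset.mul_sum]
    refine Finset.sum_congr rfl fun j _ => ?_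
    rw [toMat_symm]
    ring
  rw [h3] at h2
  simpa using h2


lemma sdot_zero_right (a : Sym D) : sdot a 0 = 0 := by
  rw [sdot_comm, sdot_zero_left]

/-- Single-spike element of `EK D K`. -/
def spike {D K : ℕ} (k : Fin K) (b : Sym D) : EK D K := fun ℓ => if ℓ = k then b else 0

lemma spike_tail {K : ℕ} (k m : Fin K) (b : Sym D) :
    ∑ ℓ ∈ Finset.Ici m, spike k b ℓ = if m ≤ k then b else 0 := by
  unfold spike
  rw [Finset.sum_ite_eq' (Finset.Ici m) k (fun _ => b)]
  simp [Finset.mem_Ici]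

lemma spike_kdot {K : ℕ} (k : Fin K) (b : Sym D) (v : EK D K) :
    kdot (spike k b) v = sdot b (v k) := by
  unfold kdot spike
  rw [Finset.sum_eq_single k]
  · simp
  · intro ℓ _ hne
    simp [hne, sdot_zero_left]
  · intro h
    exact absurd (Finset.mem_univ k) h

lemma kdot_add_left {K : ℕ} (x x' v : EK D K) :
    kdot (x + x') v = kdot x v + kdot x' v := by
  unfold kdot
  rw [← Finset.sum_add_distrib]
  exact Finset.sum_congr rfl fun k _ => by simp [sdot_add_left]

lemma tail_eq {K : ℕ} (x : EK D K) (j : Fin K) :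
    ∑ n ∈ Finset.Ico j.val K, (if h : n < K then x ⟨n, h⟩ else 0) =
      ∑ ℓ ∈ Finset.Ici j, x ℓ := by
  have hK : 0 < K := lt_of_le_of_lt (Nat.zero_le _) j.isLt
  have h1 : Finset.Ico j.val K = Finset.Icc j.val (K - 1) := by
    rw [← Finset.Ico_add_one_right_eq_Icc]
    congr 1
    omega
  rw [← Fin.map_valEmbedding_Ici, Finset.sum_map]
  refine Finset.sum_congr rfl fun ℓ _ => ?_
  simp [Fin.valEmbedding_apply, ℓ.isLt]


/-- Identification of the dual cone `Ū_K^*` and the bidual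
relation `Ū_K = (Ū_K^*)^*`. -/
theorem dual_cone_identification (D K : ℕ) (hD : 1 ≤ D) (hK : 1 ≤ K) :
    Udual D K = {x : EK D K | ∀ k : Fin K, PSD (∑ ℓ ∈ Finset.Ici k, x ℓ)} ∧
    Ubar D K = {v : EK D K | ∀ x ∈ Udual D K, 0 ≤ kdot x v} := by
  have hdual : Udual D K = {x : EK D K | ∀ k : Fin K, PSD (∑ ℓ ∈ Finset.Ici k, x ℓ)} := by
    ext x
    constructor
    · intro hx k
      apply psd_of_forall_sdot
      intro b hb
      set v : EK D K := fun ℓ => if k ≤ ℓ then b else 0 with hveq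
      have hvU : v ∈ Ubar D K := by
        constructor
        · intro ℓ
          by_cases h : k ≤ ℓ <;> simp [hveq, h, hb, PSD_zero]
        · intro i j hij
          by_cases hi : k ≤ i
          · have hj : k ≤ j := le_trans hi hij
            have : v j - v i = 0 := by simp [hveq, hi, hj]
            rw [this]; exact PSD_zero
          · by_cases hj : k ≤ j
            · have : v j - v i = b := by simp [hveq, hi, hj]
              rw [this]; exact hb
            · have : v j - v i = 0 := by simp [hveq, hi, hj]
              rw [this]; exact PSD_zero
      have h0 := hx v hvU
      have hkv : kdot x v = sdot (∑ ℓ ∈ Finset.Ici k, x ℓ) b := by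
        rw [sdot_sum_left]
        unfold kdot
        rw [← Finset.sum_subset (Finset.subset_univ (Finset.Ici k))
          (fun ℓ _ hℓ => by
            rw [Finset.mem_Ici] at hℓ
            have : v ℓ = 0 := by simp [hveq, hℓ]
            rw [this, sdot_zero_right])]
        refine Finset.sum_congr rfl fun ℓ hℓ => ?_
        rw [Finset.mem_Ici] at hℓ
        have : v ℓ = b := by simp [hveq, hℓ]
        rw [this]
      rw [sdot_comm]
      rw [hkv] at h0
      exact h0
    · intro hx v hv
      set X : ℕ → Sym D := fun n => if h : n < K then x ⟨n, h⟩ else 0 with hX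
      set W : ℕ → Sym D := fun n => if h : n < K then v ⟨n, h⟩ else 0 with hW
      set dd : ℕ → Sym D := fun n => W n - (if n = 0 then 0 else W (n - 1)) with hdd
      have htel : ∀ n, ∑ j ∈ Finset.range (n + 1), dd j = W n := by
        intro n
        induction n with
        | zero => simp [hdd]
        | succ m ih =>
          rw [Finset.sum_range_succ, ih]
          have : dd (m + 1) = W (m + 1) - W m := by simp [hdd]
          rw [this]; abel
      have hkv : kdot x v = ∑ n ∈ Finset.range K, sdot (X n) (W n) := by
        unfold kdot
        rw [← Fin.sum_univ_eq_sum_range (fun n => sdot (X n) (W n)) K]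
        exact Finset.sum_congr rfl fun k _ => by simp [hX, hW, k.isLt]
      rw [hkv]
      have step1 : ∑ n ∈ Finset.range K, sdot (X n) (W n)
          = ∑ n ∈ Finset.range K, ∑ j ∈ Finset.range (n + 1), sdot (X n) (dd j) := by
        refine Finset.sum_congr rfl fun n _ => ?_
        rw [← sdot_sum_right, htel n]
      rw [step1]
      have step2 : ∑ n ∈ Finset.range K, ∑ j ∈ Finset.range (n + 1), sdot (X n) (dd j)
          = ∑ j ∈ Finset.range K, ∑ n ∈ Finset.Ico j K, sdot (X n) (dd j) := by
        have hcomm := Finset.sum_Ico_Ico_comm 0 K (fun i j => sdot (X j) (dd i))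
        simp only [Finset.range_eq_Ico]
        exact hcomm.symm
      rw [step2]
      refine Finset.sum_nonneg fun j hj => ?_
      rw [Finset.mem_range] at hj
      rw [← sdot_sum_left]
      have hT : PSD (∑ n ∈ Finset.Ico j K, X n) := by
        have h1 : ∑ n ∈ Finset.Ico j K, X n = ∑ ℓ ∈ Finset.Ici (⟨j, hj⟩ : Fin K), x ℓ := by
          rw [hX]
          exact tail_eq x ⟨j, hj⟩
        rw [h1]
        exact hx ⟨j, hj⟩
      have hd : PSD (dd j) := by
        rcases Nat.eq_zero_or_pos j with h0 | h0
        · subst h0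
          have : dd 0 = v ⟨0, hj⟩ := by simp [hdd, hW, hj]
          rw [this]
          exact hv.1 _
        · obtain ⟨m, rfl⟩ : ∃ m, j = m + 1 := ⟨j - 1, (Nat.succ_pred_eq_of_pos h0).symm⟩
          have hm : m < K := lt_trans (Nat.lt_succ_self m) hj
          have : dd (m + 1) = v ⟨m + 1, hj⟩ - v ⟨m, hm⟩ := by
            simp [hdd, hW, hj, hm]
          rw [this]
          exact hv.2 ⟨m, hm⟩ ⟨m + 1, hj⟩ (by simp [Fin.le_def])
      exact sdot_nonneg hT hd
  refine ⟨hdual, ?_⟩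
  ext v
  constructor
  · intro hv x hx
    exact hx v hv
  · intro hv
    constructor
    · intro k
      apply psd_of_forall_sdot
      intro b hb
      have hxU : spike k b ∈ Udual D K := by
        rw [hdual]
        intro m
        rw [spike_tail]
        by_cases h : m ≤ k
        · rw [if_pos h]; exact hb
        · rw [if_neg h]; exact PSD_zero
      have h0 := hv _ hxU
      rwa [spike_kdot] at h0
    · intro i j hij
      rcases eq_or_lt_of_le hij with rfl | hlt
      · rw [sub_self]; exact PSD_zero
      apply psd_of_forall_sdot
      intro b hb
      set x : EK D K := spike j b + spike i (-b) with hxeq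
      have hxU : x ∈ Udual D K := by
        rw [hdual]
        intro m
        have hs : ∑ ℓ ∈ Finset.Ici m, x ℓ
            = (if m ≤ j then b else 0) + (if m ≤ i then -b else 0) := by
          rw [hxeq]
          simp only [Pi.add_apply]
          rw [Finset.sum_add_distrib, spike_tail, spike_tail]
        show PSD (∑ ℓ ∈ Finset.Ici m, x ℓ)
        rw [hs]
        by_cases hmi : m ≤ i
        · have hmj : m ≤ j := le_trans hmi hij
          have : (if m ≤ j then b else 0) + (if m ≤ i then -b else 0) = 0 := by
            simp [hmi, hmj]
          rw [this]; exact PSD_zero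
        · by_cases hmj : m ≤ j
          · have : (if m ≤ j then b else 0) + (if m ≤ i then -b else 0) = b := by
              simp [hmi, hmj]
            rw [this]; exact hb
          · have : (if m ≤ j then b else 0) + (if m ≤ i then -b else 0) = 0 := by
              simp [hmi, hmj]
            rw [this]; exact PSD_zero
      have h0 := hv _ hxU
      have hk : kdot x v = sdot b (v j - v i) := by
        rw [hxeq, kdot_add_left, spike_kdot, spike_kdot, sdot_sub_right, sdot_neg_left]
        ring
      rw [← hk]
      exact h0


end SpinGlassStmt
end
end

section
/- Quantitative quantile discretization bound: Let μ be a Borel probability measure on ℝ₊ with finite second moment, let k ≥ 1 be an integer, and let F_μ^{-1}(r) := inf{ s ≥ 0 : μ([0,s]) ≥ r } for r ∈ [0,1]. Then ∫_0^1 | F_μ^{-1}(u) − k ∫_{⌊ku⌋/k}^{(⌊ku⌋+1)/k} F_μ^{-1}(v) dv | du ≤ 6 k^{-1/2} ( ∫_0^1 (F_μ^{-1}(u))² du )^{1/2}. In probabilistic terms, with U uniform on [0,1] and X_μ := F_μ^{-1}(U): the first Wasserstein distance between μ and its k-block quantile discretization is at most 6 k^{-1/2} (E[X_μ²])^{1/2}.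 -/
/-!
Statement 17: quantitative quantile (Wasserstein) discretization bound.
-/

open MeasureTheory

noncomputable section

namespace SpinGlassStmt

/-- The quantile function `F_μ^{-1}(r) = inf {s ≥ 0 : μ([0,s]) ≥ r}` of a
measure on `ℝ₊`. -/
def qf (μ : Measure ℝ) (r : ℝ) : ℝ :=
  sInf {s : ℝ | 0 ≤ s ∧ r ≤ (μ (Set.Icc 0 s)).toReal}

section Aux
variable {μ : Measure ℝ} [IsProbabilityMeasure μ]

lemma qf_nonneg (μ : Measure ℝ) (r : ℝ) : 0 ≤ qf μ r :=
  Real.sInf_nonneg (fun _ hx => hx.1)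

lemma F_mono {s t : ℝ} (hst : s ≤ t) :
    (μ (Set.Icc 0 s)).toReal ≤ (μ (Set.Icc 0 t)).toReal :=
  ENNReal.toReal_mono (measure_ne_top μ _) (measure_mono (Set.Icc_subset_Icc le_rfl hst))

lemma exists_qf_mem (hsupp : μ (Set.Iio 0) = 0) {r : ℝ} (hr : r < 1) :
    ∃ s, 0 ≤ s ∧ r ≤ (μ (Set.Icc 0 s)).toReal := by
  rcases le_or_gt r 0 with h | h
  · exact ⟨0, le_rfl, h.trans ENNReal.toReal_nonneg⟩
  · have hIci : μ (Set.Ici (0:ℝ)) = 1 := by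
      have := measure_compl (measurableSet_Iio (a := (0:ℝ))) (measure_ne_top μ _)
      simpa [hsupp, Set.compl_Iio] using this
    have hU : (⋃ n : ℕ, Set.Icc (0:ℝ) n) = Set.Ici 0 := by
      ext x
      simp only [Set.mem_iUnion, Set.mem_Icc, Set.mem_Ici]
      constructor
      · rintro ⟨n, h1, _⟩; exact h1
      · intro hx; exact ⟨⌈x⌉₊, hx, Nat.le_ceil x⟩
    have hmono : Monotone (fun n : ℕ => Set.Icc (0:ℝ) n) := by
      intro a b hab
      exact Set.Icc_subset_Icc le_rfl (by exact_mod_cast hab)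
    have htend := tendsto_measure_iUnion_atTop (μ := μ) hmono
    rw [hU, hIci] at htend
    have hr' : ENNReal.ofReal r < 1 := by
      rw [← ENNReal.ofReal_one]
      exact ENNReal.ofReal_lt_ofReal_iff_of_nonneg h.le |>.mpr hr
    obtain ⟨n, hn⟩ := (htend.eventually_const_lt hr').exists
    refine ⟨n, Nat.cast_nonneg n, ?_⟩
    have := ENNReal.toReal_mono (measure_ne_top μ _) hn.le
    rwa [ENNReal.toReal_ofReal h.le] at this
lemma le_F_qf (hsupp : μ (Set.Iio 0) = 0) {r : ℝ} (hr : r < 1) :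
    r ≤ (μ (Set.Icc 0 (qf μ r))).toReal := by
  set q := qf μ r with hq
  have hne : {s : ℝ | 0 ≤ s ∧ r ≤ (μ (Set.Icc 0 s)).toReal}.Nonempty := by
    obtain ⟨s, hs0, hsr⟩ := exists_qf_mem hsupp hr
    exact ⟨s, hs0, hsr⟩
  have hbdd : BddBelow {s : ℝ | 0 ≤ s ∧ r ≤ (μ (Set.Icc 0 s)).toReal} :=
    ⟨0, fun x hx => hx.1⟩
  have key : ∀ ε > (0:ℝ), r ≤ (μ (Set.Icc 0 (q + ε))).toReal := by
    intro ε hε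
    have h2 : sInf {s : ℝ | 0 ≤ s ∧ r ≤ (μ (Set.Icc 0 s)).toReal} < q + ε := by
      have : qf μ r < q + ε := by rw [← hq]; linarith
      exact this
    obtain ⟨s, hs, hs'⟩ := exists_lt_of_csInf_lt hne h2
    exact hs.2.trans (F_mono hs'.le)
  -- limit along ε = 1/(n+1)
  have hInter : (⋂ n : ℕ, Set.Icc (0:ℝ) (q + 1/(n+1))) = Set.Icc 0 q := by
    ext x
    simp only [Set.mem_iInter, Set.mem_Icc]
    constructor
    · intro h
      refine ⟨(h 0).1, ?_⟩
      by_contra hx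
      push_neg at hx
      obtain ⟨n, hn⟩ := exists_nat_one_div_lt (sub_pos.mpr hx)
      have := (h n).2
      linarith [hn]
    · intro h n
      have : (0:ℝ) < 1/(n+1) := by positivity
      exact ⟨h.1, by linarith [h.2]⟩
  have hanti : Antitone (fun n : ℕ => Set.Icc (0:ℝ) (q + 1/(n+1))) := by
    intro a b hab
    apply Set.Icc_subset_Icc le_rfl
    have hc : (a:ℝ) + 1 ≤ (b:ℝ) + 1 := by
      have : (a:ℝ) ≤ b := Nat.cast_le.mpr hab
      linarith
    have : (1:ℝ)/((b:ℝ)+1) ≤ 1/((a:ℝ)+1) := one_div_le_one_div_of_le (by positivity) hc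
    linarith
  have htend := tendsto_measure_iInter_atTop (μ := μ)
    (fun n => (measurableSet_Icc).nullMeasurableSet) hanti ⟨0, measure_ne_top μ _⟩
  rw [hInter] at htend
  have htoReal := (ENNReal.tendsto_toReal (measure_ne_top μ _)).comp htend
  refine ge_of_tendsto htoReal (Filter.Eventually.of_forall fun n => ?_)
  exact key _ (by positivity)

lemma qf_le_of_le (hsupp : μ (Set.Iio 0) = 0) {r s : ℝ} (hs : 0 ≤ s)
    (h : r ≤ (μ (Set.Icc 0 s)).toReal) : qf μ r ≤ s :=
  csInf_le ⟨0, fun x hx => hx.1⟩ ⟨hs, h⟩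

lemma qf_le_iff (hsupp : μ (Set.Iio 0) = 0) {r s : ℝ} (hr : r < 1) (hs : 0 ≤ s) :
    qf μ r ≤ s ↔ r ≤ (μ (Set.Icc 0 s)).toReal := by
  constructor
  · intro h
    exact (le_F_qf hsupp hr).trans (F_mono h)
  · exact qf_le_of_le hsupp hs

lemma qf_mono (hsupp : μ (Set.Iio 0) = 0) {r r' : ℝ} (h : r ≤ r') (hr' : r' < 1) :
    qf μ r ≤ qf μ r' :=
  qf_le_of_le hsupp (qf_nonneg μ r') (h.trans (le_F_qf hsupp hr'))

/-- Truncated quantile function, equal to `qf μ` on `(0,1)` and `0` elsewhere. -/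
def qf' (μ : Measure ℝ) : ℝ → ℝ := (Set.Ioo (0:ℝ) 1).indicator (qf μ)

lemma qf'_nonneg (μ : Measure ℝ) (u : ℝ) : 0 ≤ qf' μ u :=
  Set.indicator_nonneg (fun x _ => qf_nonneg μ x) u

lemma measurable_qf' (hsupp : μ (Set.Iio 0) = 0) : Measurable (qf' μ) := by
  apply measurable_of_Iic
  intro s
  rcases lt_or_ge s 0 with hs | hs
  · have h : qf' μ ⁻¹' Set.Iic s = ∅ := by
      ext u
      simp only [Set.mem_preimage, Set.mem_Iic, Set.mem_empty_iff_false, iff_false, not_le]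
      exact lt_of_lt_of_le hs (qf'_nonneg μ u)
    rw [h]; exact MeasurableSet.empty
  · have h : qf' μ ⁻¹' Set.Iic s =
        (Set.Ioo 0 1 ∩ Set.Iic ((μ (Set.Icc 0 s)).toReal)) ∪ (Set.Ioo (0:ℝ) 1)ᶜ := by
      ext u
      by_cases hu : u ∈ Set.Ioo (0:ℝ) 1
      · simp only [Set.mem_preimage, Set.mem_Iic, qf', Set.indicator_of_mem hu,
          Set.mem_union, Set.mem_inter_iff, hu, true_and, Set.mem_compl_iff, not_true,
          or_false]
        exact qf_le_iff hsupp hu.2 hs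
      · simp only [Set.mem_preimage, Set.mem_Iic, qf', Set.indicator_of_notMem hu,
          Set.mem_union, Set.mem_compl_iff, hu, not_false_iff, or_true, iff_true]
        exact hs
    rw [h]
    exact ((measurableSet_Ioo.inter measurableSet_Iic).union measurableSet_Ioo.compl)

lemma map_qf' (hsupp : μ (Set.Iio 0) = 0) :
    Measure.map (qf' μ) (volume.restrict (Set.Ioo (0:ℝ) 1)) = μ := by
  haveI : IsProbabilityMeasure (volume.restrict (Set.Ioo (0:ℝ) 1)) := by
    constructor
    rw [Measure.restrict_apply_univ, Real.volume_Ioo]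
    norm_num
  haveI : IsProbabilityMeasure (Measure.map (qf' μ) (volume.restrict (Set.Ioo (0:ℝ) 1))) :=
    Measure.isProbabilityMeasure_map (measurable_qf' hsupp).aemeasurable
  refine Measure.ext_of_Iic _ _ (fun s => ?_)
  rw [Measure.map_apply (measurable_qf' hsupp) measurableSet_Iic]
  rcases lt_or_ge s 0 with hs | hs
  · have h : qf' μ ⁻¹' Set.Iic s = ∅ := by
      ext u
      simp only [Set.mem_preimage, Set.mem_Iic, Set.mem_empty_iff_false, iff_false, not_le]
      exact lt_of_lt_of_le hs (qf'_nonneg μ u)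
    rw [h]
    have : μ (Set.Iic s) = 0 :=
      measure_mono_null (fun x hx => lt_of_le_of_lt hx hs) hsupp
    simp [this]
  · set c := (μ (Set.Icc 0 s)).toReal with hc
    have hc0 : 0 ≤ c := ENNReal.toReal_nonneg
    have hc1 : c ≤ 1 := by
      rw [hc, ← ENNReal.toReal_one]
      exact ENNReal.toReal_mono ENNReal.one_ne_top prob_le_one
    have h : qf' μ ⁻¹' Set.Iic s =
        (Set.Ioo 0 1 ∩ Set.Iic c) ∪ (Set.Ioo (0:ℝ) 1)ᶜ := by
      ext u
      by_cases hu : u ∈ Set.Ioo (0:ℝ) 1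
      · simp only [Set.mem_preimage, Set.mem_Iic, qf', Set.indicator_of_mem hu,
          Set.mem_union, Set.mem_inter_iff, hu, true_and, Set.mem_compl_iff, not_true,
          or_false]
        exact qf_le_iff hsupp hu.2 hs
      · simp only [Set.mem_preimage, Set.mem_Iic, qf', Set.indicator_of_notMem hu,
          Set.mem_union, Set.mem_compl_iff, hu, not_false_iff, or_true, iff_true]
        exact hs
    rw [h, Measure.restrict_apply
      (((measurableSet_Ioo.inter measurableSet_Iic).union measurableSet_Ioo.compl))]
    have hset : ((Set.Ioo (0:ℝ) 1 ∩ Set.Iic c) ∪ (Set.Ioo (0:ℝ) 1)ᶜ) ∩ Set.Ioo 0 1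
        = Set.Ioo (0:ℝ) 1 ∩ Set.Iic c := by
      ext u
      constructor
      · rintro ⟨h1 | h1, h2⟩
        · exact h1
        · exact absurd h2 h1
      · intro h1; exact ⟨Or.inl h1, h1.1⟩
    rw [hset]
    have hμs : μ (Set.Iic s) = μ (Set.Icc 0 s) := by
      apply le_antisymm
      · have hsub : Set.Iic s ⊆ Set.Iio 0 ∪ Set.Icc 0 s := by
          intro x hx
          rcases lt_or_ge x 0 with h | h
          · exact Or.inl h
          · exact Or.inr ⟨h, hx⟩
        calc μ (Set.Iic s) ≤ μ (Set.Iio 0 ∪ Set.Icc 0 s) := measure_mono hsub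
          _ ≤ μ (Set.Iio 0) + μ (Set.Icc 0 s) := measure_union_le _ _
          _ = μ (Set.Icc 0 s) := by rw [hsupp, zero_add]
      · exact measure_mono (fun x hx => hx.2)
    rw [hμs]
    rcases eq_or_lt_of_le hc1 with h1 | h1
    · have hss : Set.Ioo (0:ℝ) 1 ∩ Set.Iic c = Set.Ioo 0 1 := by
        apply Set.inter_eq_self_of_subset_left
        intro x hx
        rw [Set.mem_Iic, h1]
        exact hx.2.le
      rw [hss, Real.volume_Ioo,
        ← ENNReal.ofReal_toReal (measure_ne_top μ (Set.Icc 0 s)), ← hc, ← h1]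
      norm_num
    · have : Set.Ioo (0:ℝ) 1 ∩ Set.Iic c = Set.Ioc 0 c := by
        ext x
        simp only [Set.mem_inter_iff, Set.mem_Ioo, Set.mem_Iic, Set.mem_Ioc]
        constructor
        · rintro ⟨⟨a, _⟩, b⟩; exact ⟨a, b⟩
        · rintro ⟨a, b⟩; exact ⟨⟨a, lt_of_le_of_lt b h1⟩, b⟩
      rw [this, Real.volume_Ioc, sub_zero, hc,
        ENNReal.ofReal_toReal (measure_ne_top μ _)]

lemma integrableOn_qf_sq (hsupp : μ (Set.Iio 0) = 0)
    (hmom : Integrable (fun x => x ^ 2) μ) :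
    IntegrableOn (fun u => (qf μ u) ^ 2) (Set.Ioo (0:ℝ) 1) volume := by
  have hmap := map_qf' (μ := μ) hsupp
  rw [← hmap] at hmom
  rw [integrable_map_measure
    (by exact (continuous_pow 2).measurable.aestronglyMeasurable)
    (measurable_qf' hsupp).aemeasurable] at hmom
  have : (fun u => (qf μ u) ^ 2) =ᵐ[volume.restrict (Set.Ioo (0:ℝ) 1)]
      ((fun x => x ^ 2) ∘ qf' μ) := by
    filter_upwards [ae_restrict_mem measurableSet_Ioo] with u hu
    simp [qf', Set.indicator_of_mem hu]
  exact (hmom.congr this.symm)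

lemma integrableOn_qf (hsupp : μ (Set.Iio 0) = 0)
    (hmom : Integrable (fun x => x ^ 2) μ) :
    IntegrableOn (qf μ) (Set.Ioo (0:ℝ) 1) volume := by
  have h2 := integrableOn_qf_sq hsupp hmom
  have haem : AEStronglyMeasurable (qf μ) (volume.restrict (Set.Ioo (0:ℝ) 1)) := by
    refine (measurable_qf' hsupp).aestronglyMeasurable.congr ?_
    filter_upwards [ae_restrict_mem measurableSet_Ioo] with u hu
    simp [qf', Set.indicator_of_mem hu]
  refine Integrable.mono' (g := fun u => 1 + (qf μ u)^2)
    (show Integrable (fun u => 1 + (qf μ u)^2) (volume.restrict (Set.Ioo (0:ℝ) 1)) from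
      ((integrableOn_const_iff (C := (1:ℝ)) (by simp)).mpr (Or.inr ?_)).add h2) haem ?_
  · rw [Real.volume_Ioo]; exact ENNReal.ofReal_lt_top
  · filter_upwards with u
    have h0 := qf_nonneg μ u
    rw [Real.norm_eq_abs, abs_of_nonneg h0]
    nlinarith [sq_nonneg (qf μ u - 1)]

lemma qf_sq_le (hsupp : μ (Set.Iio 0) = 0)
    (hmom : Integrable (fun x => x ^ 2) μ) {r : ℝ} (hr0 : 0 ≤ r) (hr1 : r < 1) :
    (qf μ r)^2 * (1 - r) ≤ ∫ u in Set.Ioo (0:ℝ) 1, (qf μ u)^2 := by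
  have h2 := integrableOn_qf_sq hsupp hmom
  have hsub : Set.Ioo r 1 ⊆ Set.Ioo (0:ℝ) 1 := Set.Ioo_subset_Ioo hr0 le_rfl
  have h2' : IntegrableOn (fun u => (qf μ u)^2) (Set.Ioo r 1) volume := h2.mono_set hsub
  have step1 : (qf μ r)^2 * (1 - r) ≤ ∫ u in Set.Ioo r 1, (qf μ u)^2 := by
    have hconst : (∫ _ in Set.Ioo r 1, (qf μ r)^2 ∂volume) = (1 - r) * (qf μ r)^2 := by
      rw [setIntegral_const, measureReal_def, Real.volume_Ioo, ENNReal.toReal_ofReal (by linarith), smul_eq_mul]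
    calc (qf μ r)^2 * (1-r) = ∫ _ in Set.Ioo r 1, (qf μ r)^2 ∂volume := by rw [hconst]; ring
      _ ≤ ∫ u in Set.Ioo r 1, (qf μ u)^2 := by
          refine setIntegral_mono_on ((integrableOn_const_iff).mpr (Or.inr ?_)) h2'
            measurableSet_Ioo ?_
          · rw [Real.volume_Ioo]; exact ENNReal.ofReal_lt_top
          · intro x hx
            have h1 : qf μ r ≤ qf μ x := qf_mono hsupp hx.1.le hx.2
            have h0 := qf_nonneg μ r
            nlinarith
  refine step1.trans (setIntegral_mono_set h2 ?_ hsub.eventuallyLE)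
  filter_upwards with u
  positivity

end Aux

/-- For a Borel probability measure `μ` on `ℝ₊` with finite
second moment and every integer `k ≥ 1`,
`∫₀¹ |F_μ^{-1}(u) - k ∫_{⌊ku⌋/k}^{(⌊ku⌋+1)/k} F_μ^{-1}(v) dv| du
  ≤ 6 k^{-1/2} (∫₀¹ (F_μ^{-1})² )^{1/2}`. -/
theorem quantile_discretization_bound
    (μ : Measure ℝ) (hμ : IsProbabilityMeasure μ)
    (hsupp : μ (Set.Iio 0) = 0)
    (hmom : Integrable (fun x => x ^ 2) μ)
    (k : ℕ) (hk : 1 ≤ k) :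
    (∫ u in Set.Ioo (0:ℝ) 1,
        |qf μ u - (k : ℝ) * ∫ v in Set.Ioo ((⌊(k : ℝ) * u⌋ : ℝ) / k)
            (((⌊(k : ℝ) * u⌋ : ℝ) + 1) / k), qf μ v|)
      ≤ 6 / Real.sqrt k * Real.sqrt (∫ u in Set.Ioo (0:ℝ) 1, (qf μ u) ^ 2) := by

  haveI := hμ
  obtain ⟨m, rfl⟩ : ∃ m, k = m + 1 := ⟨k - 1, (Nat.succ_pred_eq_of_pos hk).symm⟩
  clear hk
  set n : ℕ := m + 1 with hn
  have hn0 : (0:ℝ) < (n:ℝ) := by positivity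
  have hnm : (n:ℝ) = (m:ℝ) + 1 := by rw [hn]; push_cast; ring
  set M : ℝ := ∫ u in Set.Ioo (0:ℝ) 1, (qf μ u)^2 with hMdef
  have hM0 : 0 ≤ M := setIntegral_nonneg measurableSet_Ioo (fun x _ => sq_nonneg _)
  have hf2 : IntegrableOn (fun u => (qf μ u)^2) (Set.Ioo (0:ℝ) 1) volume :=
    integrableOn_qf_sq hsupp hmom
  have hf1 : IntegrableOn (qf μ) (Set.Ioo (0:ℝ) 1) volume := integrableOn_qf hsupp hmom
  set I : ℕ → Set ℝ := fun j => Set.Ioo ((j:ℝ)/(n:ℝ)) (((j:ℝ)+1)/(n:ℝ)) with hI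
  have hIsub : ∀ j, j < n → I j ⊆ Set.Ioo (0:ℝ) 1 := by
    intro j hj x hx
    have h1 : (0:ℝ) ≤ (j:ℝ)/(n:ℝ) := by positivity
    have h2 : ((j:ℝ)+1)/(n:ℝ) ≤ 1 := by
      rw [div_le_one hn0]
      exact_mod_cast hj
    exact ⟨lt_of_le_of_lt h1 hx.1, lt_of_lt_of_le hx.2 h2⟩
  have hIvol : ∀ j : ℕ, volume (I j) = ENNReal.ofReal (1/(n:ℝ)) := by
    intro j
    rw [hI]
    simp only
    rw [Real.volume_Ioo]
    congr 1
    field_simp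
    ring
  have hIvolR : ∀ j : ℕ, (volume (I j)).toReal = 1/(n:ℝ) := by
    intro j; rw [hIvol j, ENNReal.toReal_ofReal (by positivity)]
  have hf1I : ∀ j, j < n → IntegrableOn (qf μ) (I j) volume :=
    fun j hj => hf1.mono_set (hIsub j hj)
  have hf2I : ∀ j, j < n → IntegrableOn (fun u => (qf μ u)^2) (I j) volume :=
    fun j hj => hf2.mono_set (hIsub j hj)
  have hconst_int : ∀ (j : ℕ) (c : ℝ), IntegrableOn (fun _ => c) (I j) volume := by
    intro j c
    exact (integrableOn_const_iff).mpr (Or.inr (by rw [hIvol]; exact ENNReal.ofReal_lt_top))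
  have hconst : ∀ (j : ℕ) (c : ℝ), (∫ _ in I j, c ∂volume) = (1/(n:ℝ)) * c := by
    intro j c; rw [setIntegral_const, measureReal_def, hIvolR, smul_eq_mul]
  set a : ℕ → ℝ := fun j => (n:ℝ) * ∫ v in I j, qf μ v with ha
  have hfloor : ∀ j : ℕ, ∀ u ∈ I j, ((⌊(n:ℝ) * u⌋ : ℤ) : ℝ) = (j:ℝ) := by
    intro j u hu
    have h1 : (j:ℝ)/(n:ℝ) < u := hu.1
    have h2 : u < ((j:ℝ)+1)/(n:ℝ) := hu.2
    rw [div_lt_iff₀ hn0] at h1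
    rw [lt_div_iff₀ hn0] at h2
    have : ⌊(n:ℝ)*u⌋ = (j:ℤ) := by
      rw [Int.floor_eq_iff]
      constructor
      · push_cast; nlinarith
      · push_cast; nlinarith
    rw [this]
    push_cast; ring
  have hgeq : ∀ j : ℕ, ∀ u ∈ I j,
      (n:ℝ) * (∫ v in Set.Ioo ((⌊(n:ℝ) * u⌋ : ℝ) / n)
        (((⌊(n:ℝ) * u⌋ : ℝ) + 1) / n), qf μ v) = a j := by
    intro j u hu
    rw [hfloor j u hu, ha]
  have ha0 : ∀ j, 0 ≤ a j := by
    intro j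
    exact mul_nonneg hn0.le (setIntegral_nonneg measurableSet_Ioo (fun x _ => qf_nonneg μ x))
  have habs_int : ∀ j, j < n → IntegrableOn
      (fun u => |qf μ u - (n:ℝ) * ∫ v in Set.Ioo ((⌊(n:ℝ) * u⌋ : ℝ) / n)
        (((⌊(n:ℝ) * u⌋ : ℝ) + 1) / n), qf μ v|) (I j) volume := by
    intro j hj
    have h1 : IntegrableOn (fun u => |qf μ u - a j|) (I j) volume :=
      ((hf1I j hj).sub (hconst_int j (a j))).abs
    exact h1.congr_fun (fun u hu => by rw [hgeq j u hu]) measurableSet_Ioo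
  have hdisj : ∀ i j : ℕ, i < j → Disjoint (I i) (I j) := by
    intro i j hij
    rw [Set.disjoint_left]
    intro u hui huj
    have h1 : ((i:ℝ)+1)/(n:ℝ) ≤ (j:ℝ)/(n:ℝ) := by
      have hij' : (i:ℝ)+1 ≤ (j:ℝ) := by exact_mod_cast hij
      gcongr
    exact absurd (lt_trans huj.1 hui.2) (not_lt.mpr h1)
  have hdecomp : (∫ u in Set.Ioo (0:ℝ) 1,
        |qf μ u - (n:ℝ) * ∫ v in Set.Ioo ((⌊(n:ℝ) * u⌋ : ℝ) / n)
            (((⌊(n:ℝ) * u⌋ : ℝ) + 1) / n), qf μ v|)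
      = ∑ j ∈ Finset.range n, ∫ u in I j, |qf μ u - a j| := by
    have hae : (Set.Ioo (0:ℝ) 1 : Set ℝ) =ᵐ[volume] ⋃ j ∈ Finset.range n, I j := by
      rw [MeasureTheory.ae_eq_set]
      constructor
      · refine measure_mono_null ?_
          ((Set.countable_range (fun j : ℕ => (j:ℝ)/(n:ℝ))).measure_zero volume)
        intro u hu
        obtain ⟨⟨hu1, hu2⟩, hnotin⟩ := hu
        set j : ℕ := (⌊(n:ℝ)*u⌋).toNat with hj
        have h0 : (0:ℤ) ≤ ⌊(n:ℝ)*u⌋ := by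
          apply Int.le_floor.mpr
          push_cast
          positivity
        have hjc : ((j:ℕ):ℝ) = ((⌊(n:ℝ)*u⌋ : ℤ) : ℝ) := by
          rw [hj]; exact_mod_cast Int.toNat_of_nonneg h0
        have hfl : ((j:ℕ):ℝ) ≤ (n:ℝ)*u := by rw [hjc]; exact Int.floor_le _
        have hfl2 : (n:ℝ)*u < (j:ℕ) + 1 := by rw [hjc]; exact Int.lt_floor_add_one _
        have hjn : j < n := by
          have : ((j:ℕ):ℝ) < (n:ℝ) := lt_of_le_of_lt hfl (by nlinarith)
          exact_mod_cast this
        have hIn : u ∉ I j := fun hmem => hnotin (Set.mem_biUnion (Finset.mem_range.mpr hjn) hmem)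
        have hle : u ≤ (j:ℝ)/(n:ℝ) := by
          by_contra hlt
          push_neg at hlt
          exact hIn ⟨hlt, by rw [lt_div_iff₀ hn0] at *; nlinarith⟩
        have hge : (j:ℝ)/(n:ℝ) ≤ u := by
          rw [div_le_iff₀ hn0]
          nlinarith
        exact ⟨j, le_antisymm hge hle⟩
      · have h : (⋃ j ∈ Finset.range n, I j) ⊆ Set.Ioo (0:ℝ) 1 := by
          intro u hu
          obtain ⟨j, hj, hu⟩ := Set.mem_iUnion₂.mp hu
          exact hIsub j (Finset.mem_range.mp hj) hu
        rw [Set.diff_eq_empty.mpr h]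
        simp
    rw [setIntegral_congr_set hae, integral_biUnion_finset (Finset.range n)
      (fun j _ => measurableSet_Ioo) ?_ (fun j hj => habs_int j (Finset.mem_range.mp hj))]
    · refine Finset.sum_congr rfl (fun j hj => ?_)
      refine setIntegral_congr_fun measurableSet_Ioo (fun u hu => ?_)
      rw [hgeq j u hu]
    · intro i hi j hj hij
      rcases lt_or_gt_of_ne hij with h | h
      · exact hdisj i j h
      · exact (hdisj j i h).symm
  -- middle blocks
  have hmid : ∀ j : ℕ, j < m → (∫ u in I j, |qf μ u - a j|)
      ≤ (1/(n:ℝ)) * (qf μ (((j:ℝ)+1)/(n:ℝ)) - qf μ ((j:ℝ)/(n:ℝ))) := by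
    intro j hj
    have hjn : j < n := lt_trans hj (Nat.lt_succ_self m)
    have hj1n : ((j:ℝ)+1)/(n:ℝ) < 1 := by
      rw [div_lt_one hn0, hnm]
      have : (j:ℝ) < (m:ℝ) := by exact_mod_cast hj
      linarith
    have hlow : ∀ u ∈ I j, qf μ ((j:ℝ)/(n:ℝ)) ≤ qf μ u :=
      fun u hu => qf_mono hsupp hu.1.le (lt_trans hu.2 hj1n)
    have hhigh : ∀ u ∈ I j, qf μ u ≤ qf μ (((j:ℝ)+1)/(n:ℝ)) :=
      fun u hu => qf_mono hsupp hu.2.le hj1n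
    have halow : qf μ ((j:ℝ)/(n:ℝ)) ≤ a j := by
      have h := setIntegral_mono_on (hconst_int j _) (hf1I j hjn) measurableSet_Ioo hlow
      rw [hconst j] at h
      have := mul_le_mul_of_nonneg_left h hn0.le
      calc qf μ ((j:ℝ)/(n:ℝ)) = (n:ℝ) * ((1/(n:ℝ)) * qf μ ((j:ℝ)/(n:ℝ))) := by field_simp
        _ ≤ (n:ℝ) * ∫ v in I j, qf μ v := this
        _ = a j := by rw [ha]
    have hahigh : a j ≤ qf μ (((j:ℝ)+1)/(n:ℝ)) := by
      have h := setIntegral_mono_on (hf1I j hjn) (hconst_int j _) measurableSet_Ioo hhigh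
      rw [hconst j] at h
      have := mul_le_mul_of_nonneg_left h hn0.le
      calc a j = (n:ℝ) * ∫ v in I j, qf μ v := by rw [ha]
        _ ≤ (n:ℝ) * ((1/(n:ℝ)) * qf μ (((j:ℝ)+1)/(n:ℝ))) := this
        _ = qf μ (((j:ℝ)+1)/(n:ℝ)) := by field_simp
    have hpt : ∀ u ∈ I j, |qf μ u - a j|
        ≤ qf μ (((j:ℝ)+1)/(n:ℝ)) - qf μ ((j:ℝ)/(n:ℝ)) := by
      intro u hu
      rw [abs_le]
      constructor
      · linarith [hlow u hu, hahigh]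
      · linarith [hhigh u hu, halow]
    calc (∫ u in I j, |qf μ u - a j|)
        ≤ ∫ _ in I j, (qf μ (((j:ℝ)+1)/(n:ℝ)) - qf μ ((j:ℝ)/(n:ℝ))) ∂volume :=
          setIntegral_mono_on (((hf1I j hjn).sub (hconst_int j _)).abs) (hconst_int j _)
            measurableSet_Ioo hpt
      _ = (1/(n:ℝ)) * (qf μ (((j:ℝ)+1)/(n:ℝ)) - qf μ ((j:ℝ)/(n:ℝ))) := hconst j _
  -- last block
  have hmn : m < n := Nat.lt_succ_self m
  have hlast : (∫ u in I m, |qf μ u - a m|) ≤ 2 * (Real.sqrt M / Real.sqrt (n:ℝ)) := by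
    have hpt : ∀ u ∈ I m, |qf μ u - a m| ≤ qf μ u + a m := by
      intro u _
      rw [abs_le]
      constructor
      · linarith [qf_nonneg μ u, ha0 m]
      · linarith [qf_nonneg μ u, ha0 m]
    have hstep1 : (∫ u in I m, |qf μ u - a m|) ≤ (∫ v in I m, qf μ v) + (1/(n:ℝ)) * a m := by
      have h : (∫ u in I m, |qf μ u - a m|) ≤ ∫ u in I m, (qf μ u + a m) :=
        setIntegral_mono_on (((hf1I m hmn).sub (hconst_int m _)).abs)
          ((hf1I m hmn).add (hconst_int m (a m))) measurableSet_Ioo hpt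
      rwa [integral_add (hf1I m hmn) (hconst_int m (a m)), hconst m] at h
    have haT : (1/(n:ℝ)) * a m = ∫ v in I m, qf μ v := by
      rw [ha]
      field_simp
    have hT : (∫ v in I m, qf μ v) ≤ Real.sqrt M / Real.sqrt (n:ℝ) := by
      rcases eq_or_lt_of_le hM0 with hM | hM
      · have hsq0 : (fun u => (qf μ u)^2) =ᵐ[volume.restrict (Set.Ioo (0:ℝ) 1)] 0 := by
          refine (integral_eq_zero_iff_of_nonneg_ae ?_ hf2).mp (by rw [← hMdef, ← hM])
          filter_upwards with u
          exact sq_nonneg _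
        have hq0 : (qf μ) =ᵐ[volume.restrict (I m)] 0 := by
          have h2 := ae_restrict_of_ae_restrict_of_subset (hIsub m hmn) hsq0
          filter_upwards [h2] with u hu
          have hu' : (qf μ u)^2 = 0 := hu
          exact pow_eq_zero_iff two_ne_zero |>.mp hu'
        have hz : (∫ v in I m, qf μ v) = 0 := by
          rw [integral_congr_ae hq0]
          simp
        rw [hz]
        positivity
      · set t := Real.sqrt ((n:ℝ)*M) with htdef
        have htpos : 0 < t := Real.sqrt_pos.mpr (by positivity)
        have hpt2 : ∀ u ∈ I m, qf μ u ≤ (t + (qf μ u)^2/t)/2 := by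
          intro u _
          rw [le_div_iff₀ (by norm_num : (0:ℝ) < 2), ← sub_nonneg]
          have he : t + (qf μ u)^2/t - qf μ u * 2 = (qf μ u - t)^2/t := by
            field_simp
            ring
          rw [he]
          positivity
        have hint : IntegrableOn (fun u => (t + (qf μ u)^2/t)/2) (I m) volume :=
          (((hconst_int m t)).add ((hf2I m hmn).div_const t)).div_const 2
        have step := setIntegral_mono_on (hf1I m hmn) hint measurableSet_Ioo hpt2
        have heval : (∫ u in I m, (t + (qf μ u)^2/t)/2 ∂volume)
            = ((1/(n:ℝ))*t + (∫ u in I m, (qf μ u)^2)/t)/2 := by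
          rw [integral_div, integral_add (hconst_int m t) ((hf2I m hmn).div_const t),
            hconst m, integral_div]
        have hsub2 : (∫ u in I m, (qf μ u)^2) ≤ M := by
          rw [hMdef]
          exact setIntegral_mono_set hf2 (Filter.Eventually.of_forall (fun u => sq_nonneg _))
            ((hIsub m hmn).eventuallyLE)
        have hcomb : (∫ v in I m, qf μ v) ≤ ((1/(n:ℝ))*t + M/t)/2 := by
          refine step.trans ?_
          rw [heval]
          gcongr
        refine hcomb.trans (le_of_eq ?_)
        have hsn : (0:ℝ) < Real.sqrt (n:ℝ) := Real.sqrt_pos.mpr hn0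
        have hsM : (0:ℝ) < Real.sqrt M := Real.sqrt_pos.mpr hM
        have htm : t = Real.sqrt (n:ℝ) * Real.sqrt M := by rw [htdef, Real.sqrt_mul hn0.le]
        have h1 : Real.sqrt (n:ℝ) * Real.sqrt (n:ℝ) = (n:ℝ) := Real.mul_self_sqrt hn0.le
        have h2 : Real.sqrt M * Real.sqrt M = M := Real.mul_self_sqrt hM0
        have key : ∀ sn sM : ℝ, 0 < sn → 0 < sM →
            (1/(sn*sn) * (sn*sM) + sM*sM/(sn*sM))/2 = sM/sn := by
          intro sn sM h3 h4
          field_simp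
          ring
        calc (1/(n:ℝ) * t + M/t)/2
            = (1/(Real.sqrt (n:ℝ) * Real.sqrt (n:ℝ)) * (Real.sqrt (n:ℝ) * Real.sqrt M)
              + (Real.sqrt M * Real.sqrt M)/(Real.sqrt (n:ℝ) * Real.sqrt M))/2 := by
              rw [htm, Real.mul_self_sqrt hn0.le, Real.mul_self_sqrt hM0]
          _ = Real.sqrt M / Real.sqrt (n:ℝ) := key _ _ hsn hsM
    calc (∫ u in I m, |qf μ u - a m|) ≤ (∫ v in I m, qf μ v) + (1/(n:ℝ)) * a m := hstep1
      _ = 2 * ∫ v in I m, qf μ v := by rw [haT]; ring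
      _ ≤ 2 * (Real.sqrt M / Real.sqrt (n:ℝ)) := by linarith [hT]
  -- telescoping sum
  have htel : (∑ j ∈ Finset.range m, (qf μ (((j:ℝ)+1)/(n:ℝ)) - qf μ ((j:ℝ)/(n:ℝ))))
      = qf μ ((m:ℝ)/(n:ℝ)) - qf μ 0 := by
    have h := Finset.sum_range_sub (fun i : ℕ => qf μ ((i:ℝ)/(n:ℝ))) m
    have hc : ∀ i ∈ Finset.range m,
        qf μ (((i:ℝ)+1)/(n:ℝ)) - qf μ ((i:ℝ)/(n:ℝ))
          = qf μ ((((i+1:ℕ)):ℝ)/(n:ℝ)) - qf μ ((i:ℝ)/(n:ℝ)) := by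
      intro i _
      norm_num
    rw [Finset.sum_congr rfl hc, h]
    norm_num
  have hcheb : qf μ ((m:ℝ)/(n:ℝ)) ≤ Real.sqrt (n:ℝ) * Real.sqrt M := by
    have hr0 : 0 ≤ (m:ℝ)/(n:ℝ) := by positivity
    have hr1 : (m:ℝ)/(n:ℝ) < 1 := by
      rw [div_lt_one hn0, hnm]; linarith
    have h := qf_sq_le hsupp hmom hr0 hr1
    rw [← hMdef] at h
    have h1mr : 1 - (m:ℝ)/(n:ℝ) = 1/(n:ℝ) := by
      rw [hnm]; field_simp
      ring
    rw [h1mr] at h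
    have hq2 : (qf μ ((m:ℝ)/(n:ℝ)))^2 ≤ (n:ℝ) * M := by
      have := mul_le_mul_of_nonneg_left h hn0.le
      calc (qf μ ((m:ℝ)/(n:ℝ)))^2 = (n:ℝ) * ((qf μ ((m:ℝ)/(n:ℝ)))^2 * (1/(n:ℝ))) := by
            field_simp
        _ ≤ (n:ℝ) * M := this
    have := (Real.le_sqrt (qf_nonneg μ _) (by positivity)).mpr hq2
    rwa [Real.sqrt_mul hn0.le] at this
  -- assemble
  have hsn : (0:ℝ) < Real.sqrt (n:ℝ) := Real.sqrt_pos.mpr hn0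
  have hsM : (0:ℝ) ≤ Real.sqrt M := Real.sqrt_nonneg M
  have hmidsum : (∑ j ∈ Finset.range m, ∫ u in I j, |qf μ u - a j|)
      ≤ Real.sqrt M / Real.sqrt (n:ℝ) := by
    calc (∑ j ∈ Finset.range m, ∫ u in I j, |qf μ u - a j|)
        ≤ ∑ j ∈ Finset.range m,
            (1/(n:ℝ)) * (qf μ (((j:ℝ)+1)/(n:ℝ)) - qf μ ((j:ℝ)/(n:ℝ))) :=
          Finset.sum_le_sum (fun j hj => hmid j (Finset.mem_range.mp hj))
      _ = (1/(n:ℝ)) * (qf μ ((m:ℝ)/(n:ℝ)) - qf μ 0) := by rw [← Finset.mul_sum, htel]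
      _ ≤ (1/(n:ℝ)) * (Real.sqrt (n:ℝ) * Real.sqrt M) := by
          have := qf_nonneg μ 0
          apply mul_le_mul_of_nonneg_left _ (by positivity)
          linarith [hcheb]
      _ = Real.sqrt M / Real.sqrt (n:ℝ) := by
          have key : ∀ sn sM : ℝ, 0 < sn → (1/(sn*sn)) * (sn*sM) = sM/sn := by
            intro sn sM h3
            field_simp
          calc (1/(n:ℝ)) * (Real.sqrt (n:ℝ) * Real.sqrt M)
              = (1/(Real.sqrt (n:ℝ)*Real.sqrt (n:ℝ))) * (Real.sqrt (n:ℝ) * Real.sqrt M) := by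
                rw [Real.mul_self_sqrt hn0.le]
            _ = Real.sqrt M / Real.sqrt (n:ℝ) := key _ _ hsn
  rw [hdecomp, hn, Finset.sum_range_succ, ← hn]
  have hfinal : (∑ j ∈ Finset.range m, ∫ u in I j, |qf μ u - a j|)
      + (∫ u in I m, |qf μ u - a m|)
      ≤ 3 * (Real.sqrt M / Real.sqrt (n:ℝ)) := by linarith [hmidsum, hlast]
  refine hfinal.trans ?_
  have he : 6 / Real.sqrt (n:ℝ) * Real.sqrt M = 6 * (Real.sqrt M / Real.sqrt (n:ℝ)) := by
    ring
  rw [he]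
  have hpos : 0 ≤ Real.sqrt M / Real.sqrt (n:ℝ) := by positivity
  linarith


end SpinGlassStmt
end
end

section
/- Block-averaging bound for nondecreasing nonnegative tuples: Let K, R ≥ 1 be integers, set K' := RK, and let x = (x_1,…,x_{K'}) ∈ ℝ₊^{K'} be nondecreasing (x_j ≤ x_{j+1} for all j). For k ∈ {1,…,K} let m_k := (1/R) Σ_{r=1}^R x_{(k−1)R+r} be the k-th block average, and set |x|₂ := ( (1/K') Σ_{j=1}^{K'} x_j² )^{1/2}. Then (1/K') Σ_{j=1}^{K'} | x_j − m_{⌈j/R⌉} | ≤ 3 |x|₂ K^{-1/2}. -/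
/-!
Statement 18: block-averaging bound for nondecreasing nonnegative tuples.
-/

noncomputable section

namespace SpinGlassStmt

private lemma sum_blocks (f : ℕ → ℝ) (R : ℕ) (K : ℕ) :
    ∑ j ∈ Finset.range (R * K), f j
      = ∑ b ∈ Finset.range K, ∑ r ∈ Finset.range R, f (b * R + r) := by
  induction K with
  | zero => simp
  | succ n ih =>
    rw [Nat.mul_succ, Finset.sum_range_add, ih, Finset.sum_range_succ]
    congr 1
    exact Finset.sum_congr rfl fun r _ => by rw [mul_comm n R]

set_option maxHeartbeats 1600000 in
theorem block_averaging_bound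
    (K R : ℕ) (hK : 1 ≤ K) (hR : 1 ≤ R) (x : ℕ → ℝ)
    (hnn : ∀ j < R * K, 0 ≤ x j)
    (hmono : ∀ i j : ℕ, i ≤ j → j < R * K → x i ≤ x j) :
    (1 / (R * K : ℝ)) * ∑ j ∈ Finset.range (R * K),
        |x j - (1 / (R : ℝ)) * ∑ r ∈ Finset.range R, x ((j / R) * R + r)|
      ≤ 3 * Real.sqrt ((1 / (R * K : ℝ)) * ∑ j ∈ Finset.range (R * K), (x j) ^ 2)
          / Real.sqrt K := by
  have hRpos : 0 < R := hR
  have hKpos : 0 < K := hK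
  have hRR : (0:ℝ) < R := by exact_mod_cast hRpos
  have hKR : (0:ℝ) < K := by exact_mod_cast hKpos
  set m : ℕ → ℝ := fun b => (1 / (R : ℝ)) * ∑ r ∈ Finset.range R, x (b * R + r) with hm
  have hdiv : ∀ b r : ℕ, r < R → (b * R + r) / R = b := by
    intro b r hr
    rw [Nat.add_comm, Nat.add_mul_div_right _ _ hRpos, Nat.div_eq_of_lt hr, Nat.zero_add]
  have hrw : ∑ j ∈ Finset.range (R * K),
      |x j - (1 / (R : ℝ)) * ∑ r ∈ Finset.range R, x ((j / R) * R + r)|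
      = ∑ b ∈ Finset.range K, ∑ r ∈ Finset.range R, |x (b * R + r) - m b| := by
    rw [sum_blocks]
    refine Finset.sum_congr rfl fun b _ => Finset.sum_congr rfl fun r hr => ?_
    rw [hdiv b r (Finset.mem_range.mp hr)]
  set T : ℝ := ∑ j ∈ Finset.range (R * K), (x j) ^ 2 with hTdef
  have hTblocks : T = ∑ b ∈ Finset.range K, ∑ r ∈ Finset.range R, (x (b * R + r)) ^ 2 :=
    sum_blocks _ R K
  have hTnn : 0 ≤ T := Finset.sum_nonneg fun j _ => sq_nonneg _
  have hidx : ∀ b r : ℕ, b < K → r < R → b * R + r < R * K := by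
    intro b r hb hr
    calc b * R + r < b * R + R := by omega
      _ = (b + 1) * R := by ring
      _ ≤ K * R := Nat.mul_le_mul_right R hb
      _ = R * K := Nat.mul_comm K R
  have hle1 : ∀ b r : ℕ, r < R → b * R + r ≤ (b + 1) * R := by
    intro b r hr
    calc b * R + r ≤ b * R + R := by omega
      _ = (b + 1) * R := by ring
  -- bounds on values and on block averages, for non-last blocks
  have key1 : ∀ b : ℕ, b + 1 < K →
      ∑ r ∈ Finset.range R, |x (b * R + r) - m b|
        ≤ (R : ℝ) * (x ((b + 1) * R) - x (b * R)) := by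
    intro b hb
    have hub : (b + 1) * R < R * K := by
      calc (b + 1) * R < K * R := (Nat.mul_lt_mul_right hRpos).mpr hb
        _ = R * K := Nat.mul_comm K R
    have hlow : ∀ r < R, x (b * R) ≤ x (b * R + r) := fun r hr =>
      hmono _ _ (Nat.le_add_right _ _) (hidx b r (by omega) hr)
    have hhigh : ∀ r < R, x (b * R + r) ≤ x ((b + 1) * R) := fun r hr =>
      hmono _ _ (hle1 b r hr) hub
    have hmlow : x (b * R) ≤ m b := by
      show x (b * R) ≤ (1 / (R : ℝ)) * ∑ r ∈ Finset.range R, x (b * R + r)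
      have : (R : ℝ) * x (b * R) ≤ ∑ r ∈ Finset.range R, x (b * R + r) := by
        calc (R : ℝ) * x (b * R) = ∑ _r ∈ Finset.range R, x (b * R) := by
              simp [mul_comm]
          _ ≤ _ := Finset.sum_le_sum fun r hr => hlow r (Finset.mem_range.mp hr)
      rw [div_mul_eq_mul_div, one_mul, le_div_iff₀ hRR]
      linarith [this]
    have hmhigh : m b ≤ x ((b + 1) * R) := by
      show (1 / (R : ℝ)) * ∑ r ∈ Finset.range R, x (b * R + r) ≤ x ((b + 1) * R)
      have : ∑ r ∈ Finset.range R, x (b * R + r) ≤ (R : ℝ) * x ((b + 1) * R) := by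
        calc ∑ r ∈ Finset.range R, x (b * R + r)
            ≤ ∑ _r ∈ Finset.range R, x ((b + 1) * R) :=
              Finset.sum_le_sum fun r hr => hhigh r (Finset.mem_range.mp hr)
          _ = (R : ℝ) * x ((b + 1) * R) := by simp [mul_comm]
      rw [div_mul_eq_mul_div, one_mul, div_le_iff₀ hRR]
      linarith [this]
    calc ∑ r ∈ Finset.range R, |x (b * R + r) - m b|
        ≤ ∑ _r ∈ Finset.range R, (x ((b + 1) * R) - x (b * R)) := by
          refine Finset.sum_le_sum fun r hr => ?_
          have hr' := Finset.mem_range.mp hr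
          rw [abs_le]
          exact ⟨by linarith [hlow r hr', hmhigh], by linarith [hhigh r hr', hmlow]⟩
      _ = (R : ℝ) * (x ((b + 1) * R) - x (b * R)) := by simp [mul_comm]; ring
  -- last block
  set S : ℝ := ∑ r ∈ Finset.range R, x ((K - 1) * R + r) with hSdef
  have hSnn : 0 ≤ S := Finset.sum_nonneg fun r hr =>
    hnn _ (hidx (K - 1) r (by omega) (Finset.mem_range.mp hr))
  have key2 : ∑ r ∈ Finset.range R, |x ((K - 1) * R + r) - m (K - 1)| ≤ 2 * S := by
    have hmval : m (K - 1) = S / R := by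
      show (1 / (R : ℝ)) * ∑ r ∈ Finset.range R, x ((K - 1) * R + r) = S / R
      rw [hSdef]; ring
    have hmnn : 0 ≤ m (K - 1) := by
      rw [hmval]; positivity
    calc ∑ r ∈ Finset.range R, |x ((K - 1) * R + r) - m (K - 1)|
        ≤ ∑ r ∈ Finset.range R, (x ((K - 1) * R + r) + m (K - 1)) := by
          refine Finset.sum_le_sum fun r hr => ?_
          have hxnn := hnn _ (hidx (K - 1) r (by omega) (Finset.mem_range.mp hr))
          rw [abs_le]
          constructor <;> nlinarith
      _ = S + (R : ℝ) * m (K - 1) := by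
          rw [Finset.sum_add_distrib, hSdef]
          simp [mul_comm]
      _ = 2 * S := by rw [hmval]; field_simp; ring
  -- key quantities for the final estimate
  set L : ℝ := x ((K - 1) * R) with hLdef
  have hLnn : 0 ≤ L := by
    have h := hidx (K - 1) 0 (by omega) hRpos
    exact hnn _ (by omega)
  -- the last block controls L and S via T
  have hlastT : ∑ r ∈ Finset.range R, (x ((K - 1) * R + r)) ^ 2 ≤ T := by
    rw [hTblocks]
    exact Finset.single_le_sum
      (f := fun b => ∑ r ∈ Finset.range R, (x (b * R + r)) ^ 2)
      (fun b _ => Finset.sum_nonneg fun r _ => sq_nonneg (x (b * R + r)))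
      (Finset.mem_range.mpr (by omega))
  have hL2 : (R : ℝ) * L ^ 2 ≤ T := by
    refine le_trans ?_ hlastT
    calc (R : ℝ) * L ^ 2 = ∑ _r ∈ Finset.range R, L ^ 2 := by simp [mul_comm]
      _ ≤ _ := by
          refine Finset.sum_le_sum fun r hr => ?_
          have hr' := Finset.mem_range.mp hr
          have h1 : L ≤ x ((K - 1) * R + r) :=
            hmono _ _ (Nat.le_add_right _ _) (hidx (K - 1) r (by omega) hr')
          nlinarith
  have hS2 : S ^ 2 ≤ (R : ℝ) * T := by
    have := sq_sum_le_card_mul_sum_sq (s := Finset.range R)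
      (f := fun r => x ((K - 1) * R + r))
    simp only [Finset.card_range] at this
    calc S ^ 2 ≤ (R : ℝ) * ∑ r ∈ Finset.range R, (x ((K - 1) * R + r)) ^ 2 := this
      _ ≤ (R : ℝ) * T := by nlinarith [hlastT]
  -- hence L and S are bounded by sqrt(R) * sqrt(T) appropriately
  have hsqR : Real.sqrt R * Real.sqrt R = (R : ℝ) := Real.mul_self_sqrt hRR.le
  have hsqRpos : 0 < Real.sqrt R := Real.sqrt_pos.mpr hRR
  have hsqT : Real.sqrt T * Real.sqrt T = T := Real.mul_self_sqrt hTnn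
  have hSbound : S ≤ Real.sqrt R * Real.sqrt T := by
    have h2 : Real.sqrt R * Real.sqrt T = Real.sqrt (R * T) := (Real.sqrt_mul hRR.le T).symm
    rw [h2]
    have := Real.sqrt_le_sqrt hS2
    rwa [Real.sqrt_sq hSnn] at this
  have hRL : (R : ℝ) * L ≤ Real.sqrt R * Real.sqrt T := by
    have h2 : Real.sqrt R * Real.sqrt T = Real.sqrt (R * T) := (Real.sqrt_mul hRR.le T).symm
    rw [h2]
    have h1 : ((R : ℝ) * L) ^ 2 ≤ (R : ℝ) * T := by nlinarith [hL2, hLnn, hRR]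
    have := Real.sqrt_le_sqrt h1
    rwa [Real.sqrt_sq (by positivity)] at this
  -- total bound
  have hTotal : ∑ b ∈ Finset.range K, ∑ r ∈ Finset.range R, |x (b * R + r) - m b|
      ≤ 3 * (Real.sqrt R * Real.sqrt T) := by
    have hx0 : 0 ≤ x 0 := hnn 0 (by positivity)
    have hKs : Finset.range K = Finset.range ((K - 1) + 1) := by
      congr 1; omega
    rw [hKs, Finset.sum_range_succ]
    have h1 : ∑ b ∈ Finset.range (K - 1), ∑ r ∈ Finset.range R, |x (b * R + r) - m b|
        ≤ ∑ b ∈ Finset.range (K - 1), (R : ℝ) * (x ((b + 1) * R) - x (b * R)) :=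
      Finset.sum_le_sum fun b hb => key1 b (by
        have := Finset.mem_range.mp hb; omega)
    have h2 : ∑ b ∈ Finset.range (K - 1), (R : ℝ) * (x ((b + 1) * R) - x (b * R))
        = (R : ℝ) * (L - x 0) := by
      rw [← Finset.mul_sum, Finset.sum_range_sub (fun b => x (b * R)) (K - 1)]
      simp [hLdef]
    have h3 : (0:ℝ) ≤ (R : ℝ) * x 0 := mul_nonneg hRR.le hx0
    have := key2
    nlinarith [hRL, hSbound]
  -- final algebraic identity
  have hsr : (R : ℝ) = Real.sqrt R ^ 2 := (Real.sq_sqrt hRR.le).symm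
  have hsk : (K : ℝ) = Real.sqrt K ^ 2 := (Real.sq_sqrt hKR.le).symm
  have hsqKpos : 0 < Real.sqrt K := Real.sqrt_pos.mpr hKR
  have e1 : Real.sqrt ((1 / (R * K : ℝ)) * T)
      = Real.sqrt T / (Real.sqrt R * Real.sqrt K) := by
    rw [show (1 / (R * K : ℝ)) * T = T / ((R : ℝ) * K) by ring,
      Real.sqrt_div hTnn, Real.sqrt_mul hRR.le]
  have e2 : 3 * Real.sqrt ((1 / (R * K : ℝ)) * T) / Real.sqrt K
      = 3 * Real.sqrt T / (Real.sqrt R * K) := by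
    rw [e1, ← mul_div_assoc, div_div, mul_assoc (Real.sqrt R),
      Real.mul_self_sqrt hKR.le]
  have e3 : (1 / (R * K : ℝ)) * (3 * (Real.sqrt R * Real.sqrt T))
      = 3 * Real.sqrt T / (Real.sqrt R * K) := by
    have h := hsqR
    field_simp
    linear_combination (Real.sqrt T) * h
  calc (1 / (R * K : ℝ)) * ∑ j ∈ Finset.range (R * K),
        |x j - (1 / (R : ℝ)) * ∑ r ∈ Finset.range R, x ((j / R) * R + r)|
      = (1 / (R * K : ℝ)) * ∑ b ∈ Finset.range K, ∑ r ∈ Finset.range R,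
          |x (b * R + r) - m b| := by rw [hrw]
    _ ≤ (1 / (R * K : ℝ)) * (3 * (Real.sqrt R * Real.sqrt T)) := by
        refine mul_le_mul_of_nonneg_left hTotal (by positivity)
    _ = 3 * Real.sqrt ((1 / (R * K : ℝ)) * T) / Real.sqrt K := by rw [e2, e3]

end SpinGlassStmt
end
end
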